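/- arXiv:1708.02825 — 2 statements merged into one kernel-verified Lean document; each statement's English description precedes it below -/
import Mathlib

section
/- Let p, q, r be three points in the Euclidean plane that are not collinear. If each of p, q, r is moved by a distance of at most d/81, where d is the minimum of the three distances from each point to the line through the other two, then the resulting three points are still not collinear. -/
noncomputable def lineThrough (p q : EuclideanSpace ℝ (Fin 2)) : Set (EuclideanSpace ℝ (Fin 2)) :=
  ↑(affineSpan ℝ ({p, q} : Set (EuclideanSpace ℝ (Fin 2))))

noncomputable def distToLine (r p q : EuclideanSpace ℝ (Fin 2)) : ℝ :=
  Metric.infDist r (lineThrough p q)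

namespace Stmt0Aux

noncomputable def detv (u v : EuclideanSpace ℝ (Fin 2)) : ℝ := u 0 * v 1 - u 1 * v 0

lemma normsq (u : EuclideanSpace ℝ (Fin 2)) : ‖u‖ ^ 2 = u 0 ^ 2 + u 1 ^ 2 := by
  rw [← real_inner_self_eq_norm_sq]
  simp only [PiLp.inner_apply, RCLike.inner_apply, conj_trivial, Fin.sum_univ_two]
  ring

lemma det_of_coll {a b c : EuclideanSpace ℝ (Fin 2)}
    (h : Collinear ℝ ({a, b, c} : Set (EuclideanSpace ℝ (Fin 2)))) :
    detv (b - a) (c - a) = 0 := by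
  obtain ⟨w, hw⟩ := (collinear_iff_of_mem (Set.mem_insert a _)).1 h
  obtain ⟨s, hs⟩ := hw b (by simp)
  obtain ⟨t, ht⟩ := hw c (by simp)
  have hb : b - a = s • w := by
    rw [hs, vadd_eq_add, add_sub_cancel_right]
  have hc : c - a = t • w := by
    rw [ht, vadd_eq_add, add_sub_cancel_right]
  simp only [detv, hb, hc, PiLp.smul_apply, smul_eq_mul]
  ring

lemma coll_of_det {a b c : EuclideanSpace ℝ (Fin 2)}
    (h : detv (b - a) (c - a) = 0) :
    Collinear ℝ ({a, b, c} : Set (EuclideanSpace ℝ (Fin 2))) := by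
  rw [collinear_iff_of_mem (Set.mem_insert a _)]
  by_cases h0 : b - a = 0
  · have hba : b = a := by rwa [sub_eq_zero] at h0
    refine ⟨c - a, fun x hx => ?_⟩
    simp only [Set.mem_insert_iff, Set.mem_singleton_iff] at hx
    rcases hx with rfl | rfl | rfl
    · exact ⟨0, by simp [vadd_eq_add]⟩
    · exact ⟨0, by simp [hba, vadd_eq_add]⟩
    · exact ⟨1, by rw [eq_vadd_iff_vsub_eq, vsub_eq_sub, one_smul]⟩
  · have h01 : (b - a) 0 ≠ 0 ∨ (b - a) 1 ≠ 0 := by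
      by_contra hc
      push_neg at hc
      apply h0
      ext i
      fin_cases i
      · simpa using hc.1
      · simpa using hc.2
    have hdet : (b - a) 0 * (c - a) 1 = (b - a) 1 * (c - a) 0 := by
      simp only [detv] at h; linarith
    refine ⟨b - a, fun x hx => ?_⟩
    simp only [Set.mem_insert_iff, Set.mem_singleton_iff] at hx
    rcases hx with rfl | rfl | rfl
    · exact ⟨0, by simp [vadd_eq_add]⟩
    · exact ⟨1, by rw [eq_vadd_iff_vsub_eq, vsub_eq_sub, one_smul]⟩
    · have hdet' : (b 0 - a 0) * (x 1 - a 1) = (b 1 - a 1) * (x 0 - a 0) := by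
        simpa using hdet
      rcases h01 with h1 | h1
      · have h1' : b 0 - a 0 ≠ 0 := by simpa using h1
        refine ⟨(x - a) 0 / (b - a) 0, ?_⟩
        rw [eq_vadd_iff_vsub_eq, vsub_eq_sub]
        ext i
        fin_cases i
        · simp only [PiLp.smul_apply, smul_eq_mul, PiLp.sub_apply, Fin.zero_eta, Fin.mk_one]
          field_simp
        · simp only [PiLp.smul_apply, smul_eq_mul, PiLp.sub_apply, Fin.zero_eta, Fin.mk_one]
          field_simp
          first
          | linear_combination hdet'
          | linear_combination 2 * hdet'
          | linear_combination -hdet'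
          | linear_combination (-2 : ℝ) * hdet'
      · have h1' : b 1 - a 1 ≠ 0 := by simpa using h1
        refine ⟨(x - a) 1 / (b - a) 1, ?_⟩
        rw [eq_vadd_iff_vsub_eq, vsub_eq_sub]
        ext i
        fin_cases i
        · simp only [PiLp.smul_apply, smul_eq_mul, PiLp.sub_apply, Fin.zero_eta, Fin.mk_one]
          field_simp
          first
          | linear_combination hdet'
          | linear_combination 2 * hdet'
          | linear_combination -hdet'
          | linear_combination (-2 : ℝ) * hdet'
        · simp only [PiLp.smul_apply, smul_eq_mul, PiLp.sub_apply, Fin.zero_eta, Fin.mk_one]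
          field_simp

lemma abs_detv_le (u v : EuclideanSpace ℝ (Fin 2)) : |detv u v| ≤ ‖u‖ * ‖v‖ := by
  have h1 := normsq u
  have h2 := normsq v
  have hu : (0:ℝ) ≤ ‖u‖ := norm_nonneg u
  have hv : (0:ℝ) ≤ ‖v‖ := norm_nonneg v
  have key : detv u v ^ 2 ≤ (‖u‖ * ‖v‖) ^ 2 := by
    rw [mul_pow, h1, h2]
    simp only [detv]
    nlinarith [sq_nonneg (u 0 * v 0 + u 1 * v 1)]
  calc |detv u v| = Real.sqrt (detv u v ^ 2) := (Real.sqrt_sq_eq_abs _).symm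
    _ ≤ Real.sqrt ((‖u‖ * ‖v‖) ^ 2) := Real.sqrt_le_sqrt key
    _ = ‖u‖ * ‖v‖ := Real.sqrt_sq (by positivity)

-- key geometric lemma: infDist times base ≤ |det|
lemma infDist_mul_le (p q r : EuclideanSpace ℝ (Fin 2)) :
    Metric.infDist r (lineThrough p q) * dist p q ≤ |detv (q - p) (r - p)| := by
  by_cases hpq : p = q
  · rw [hpq, dist_self, mul_zero]; exact abs_nonneg _
  set u := q - p with hu
  set v := r - p with hv
  have hu0 : ‖u‖ ≠ 0 := by
    rw [hu, norm_ne_zero_iff, sub_ne_zero]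
    exact fun hh => hpq hh.symm
  set t : ℝ := (inner ℝ v u : ℝ) / ‖u‖ ^ 2 with ht
  set x : EuclideanSpace ℝ (Fin 2) := t • u + p with hx
  have hmem : x ∈ lineThrough p q := by
    have hp : p ∈ affineSpan ℝ ({p, q} : Set (EuclideanSpace ℝ (Fin 2))) :=
      subset_affineSpan ℝ _ (Set.mem_insert _ _)
    have hq : q ∈ affineSpan ℝ ({p, q} : Set (EuclideanSpace ℝ (Fin 2))) :=
      subset_affineSpan ℝ _ (by simp)
    have hdir : u ∈ (affineSpan ℝ ({p, q} : Set (EuclideanSpace ℝ (Fin 2)))).direction := by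
      have := AffineSubspace.vsub_mem_direction hq hp
      rwa [vsub_eq_sub] at this
    have : t • u +ᵥ p ∈ affineSpan ℝ ({p, q} : Set (EuclideanSpace ℝ (Fin 2))) :=
      AffineSubspace.vadd_mem_of_mem_direction (Submodule.smul_mem _ t hdir) hp
    simpa [lineThrough, vadd_eq_add, hx] using this
  have h1 : Metric.infDist r (lineThrough p q) ≤ dist r x :=
    Metric.infDist_le_dist_of_mem hmem
  have hsq : (dist r x * dist p q) ^ 2 = detv u v ^ 2 := by
    have hd1 : dist r x = ‖v - t • u‖ := by
      rw [dist_eq_norm, hx, hv]; congr 1; abel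
    have hd2 : dist p q = ‖u‖ := by
      rw [dist_eq_norm, hu, ← norm_neg]; congr 1; abel
    rw [hd1, hd2, mul_pow, normsq, normsq]
    have hiv : (inner ℝ v u : ℝ) = v 0 * u 0 + v 1 * u 1 := by
      simp only [PiLp.inner_apply, RCLike.inner_apply, conj_trivial, Fin.sum_univ_two]
      ring
    have hnu : ‖u‖ ^ 2 = u 0 ^ 2 + u 1 ^ 2 := normsq u
    have hvt0 : (v - t • u) 0 = v 0 - t * u 0 := by simp
    have hvt1 : (v - t • u) 1 = v 1 - t * u 1 := by simp
    rw [hvt0, hvt1]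
    have hne : u 0 ^ 2 + u 1 ^ 2 ≠ 0 := by rw [← hnu]; positivity
    have htval : t = (v 0 * u 0 + v 1 * u 1) / (u 0 ^ 2 + u 1 ^ 2) := by
      rw [ht, hiv, hnu]
    rw [htval]
    simp only [detv]
    field_simp
    ring
  have hdetsym : detv u v = - detv v u := by simp [detv]; ring
  have habs : |detv (q - p) (r - p)| = |detv u v| := by rw [← hu, ← hv]
  rw [habs]
  have hnn : 0 ≤ dist r x * dist p q := by positivity
  have h2 : (dist r x * dist p q) ^ 2 = |detv u v| ^ 2 := by rw [hsq, sq_abs]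
  have heq : dist r x * dist p q = |detv u v| := by
    have h3 := congrArg Real.sqrt h2
    rwa [Real.sqrt_sq hnn, Real.sqrt_sq (abs_nonneg _)] at h3
  calc Metric.infDist r (lineThrough p q) * dist p q ≤ dist r x * dist p q :=
        mul_le_mul_of_nonneg_right h1 dist_nonneg
    _ = |detv u v| := heq

end Stmt0Aux

open Stmt0Aux in
theorem stmt0 (p q r p' q' r' : EuclideanSpace ℝ (Fin 2))
    (hcol : ¬ Collinear ℝ ({p, q, r} : Set (EuclideanSpace ℝ (Fin 2))))
    (d : ℝ)
    (hd : d = min (min (distToLine p q r) (distToLine q p r)) (distToLine r p q))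
    (hp : dist p p' ≤ d / 81) (hq : dist q q' ≤ d / 81) (hr : dist r r' ≤ d / 81) :
    ¬ Collinear ℝ ({p', q', r'} : Set (EuclideanSpace ℝ (Fin 2))) := by
  intro hcol'
  -- basic nonnegativity
  have hd0 : 0 ≤ d := by
    rw [hd]
    exact le_min (le_min Metric.infDist_nonneg Metric.infDist_nonneg) Metric.infDist_nonneg
  set D : ℝ := |detv (q - p) (r - p)| with hD
  have hDpos : 0 < D := by
    rw [hD, abs_pos]
    intro h
    exact hcol (coll_of_det h)
  -- d ≤ each relevant infDist
  have hd1 : d ≤ Metric.infDist r (lineThrough p q) := by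
    rw [hd]; exact min_le_right _ _
  have hd2 : d ≤ Metric.infDist q (lineThrough p r) := by
    rw [hd]; exact le_trans (min_le_left _ _) (min_le_right _ _)
  -- D ≥ d * ‖q - p‖ and D ≥ d * ‖r - p‖
  have hbase1 : d * dist p q ≤ D := by
    calc d * dist p q ≤ Metric.infDist r (lineThrough p q) * dist p q :=
          mul_le_mul_of_nonneg_right hd1 dist_nonneg
      _ ≤ |detv (q - p) (r - p)| := infDist_mul_le p q r
  have hbase2 : d * dist p r ≤ D := by
    have h := infDist_mul_le p r q
    have : |detv (r - p) (q - p)| = D := by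
      rw [hD]; simp only [detv]; rw [abs_sub_comm]; ring_nf
    calc d * dist p r ≤ Metric.infDist q (lineThrough p r) * dist p r :=
          mul_le_mul_of_nonneg_right hd2 dist_nonneg
      _ ≤ |detv (r - p) (q - p)| := h
      _ = D := this
  -- d ≤ ‖q - p‖ and d ≤ ‖r - p‖
  have hdq : d ≤ dist p q := by
    refine le_trans hd2 ?_
    have hmem : p ∈ lineThrough p r := subset_affineSpan ℝ _ (Set.mem_insert _ _)
    calc Metric.infDist q (lineThrough p r) ≤ dist q p := Metric.infDist_le_dist_of_mem hmem
      _ = dist p q := dist_comm q p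
  have hdr : d ≤ dist p r := by
    refine le_trans hd1 ?_
    have hmem : p ∈ lineThrough p q := subset_affineSpan ℝ _ (Set.mem_insert _ _)
    calc Metric.infDist r (lineThrough p q) ≤ dist r p := Metric.infDist_le_dist_of_mem hmem
      _ = dist p r := dist_comm r p
  -- perturbation vectors
  set u : EuclideanSpace ℝ (Fin 2) := (q' - p') - (q - p) with hu
  set v : EuclideanSpace ℝ (Fin 2) := (r' - p') - (r - p) with hv
  have hun : ‖u‖ ≤ 2 * (d / 81) := by
    have : u = (q' - q) - (p' - p) := by rw [hu]; abel
    rw [this]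
    calc ‖(q' - q) - (p' - p)‖ ≤ ‖q' - q‖ + ‖p' - p‖ := norm_sub_le _ _
      _ = dist q q' + dist p p' := by rw [dist_eq_norm, dist_eq_norm, norm_sub_rev q' q, norm_sub_rev p' p]
      _ ≤ d / 81 + d / 81 := add_le_add hq hp
      _ = 2 * (d / 81) := by ring
  have hvn : ‖v‖ ≤ 2 * (d / 81) := by
    have : v = (r' - r) - (p' - p) := by rw [hv]; abel
    rw [this]
    calc ‖(r' - r) - (p' - p)‖ ≤ ‖r' - r‖ + ‖p' - p‖ := norm_sub_le _ _
      _ = dist r r' + dist p p' := by rw [dist_eq_norm, dist_eq_norm, norm_sub_rev r' r, norm_sub_rev p' p]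
      _ ≤ d / 81 + d / 81 := add_le_add hr hp
      _ = 2 * (d / 81) := by ring
  -- determinant of perturbed triple is zero
  have hdet' : detv (q' - p') (r' - p') = 0 := det_of_coll hcol'
  -- trilinear expansion
  have hexp : detv (q' - p') (r' - p') - detv (q - p) (r - p)
      = detv (q - p) v + detv u (r - p) + detv u v := by
    simp only [detv, hu, hv, PiLp.sub_apply]
    ring
  have hDle : D ≤ 2 * (d / 81) * ‖q - p‖ + 2 * (d / 81) * ‖r - p‖ + (2 * (d / 81)) * (2 * (d / 81)) := by
    have h1 : |detv (q - p) v| ≤ ‖q - p‖ * (2 * (d / 81)) := by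
      refine le_trans (abs_detv_le _ _) ?_
      exact mul_le_mul_of_nonneg_left hvn (norm_nonneg _)
    have h2 : |detv u (r - p)| ≤ 2 * (d / 81) * ‖r - p‖ := by
      refine le_trans (abs_detv_le _ _) ?_
      exact mul_le_mul_of_nonneg_right hun (norm_nonneg _)
    have h3 : |detv u v| ≤ 2 * (d / 81) * (2 * (d / 81)) := by
      refine le_trans (abs_detv_le _ _) ?_
      exact mul_le_mul hun hvn (norm_nonneg _) (by positivity)
    have hD' : D = |detv (q - p) v + detv u (r - p) + detv u v| := by
      rw [hD, ← hexp, hdet']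
      rw [zero_sub, abs_neg]
    rw [hD']
    calc |detv (q - p) v + detv u (r - p) + detv u v|
        ≤ |detv (q - p) v| + |detv u (r - p)| + |detv u v| := by
          exact le_trans (abs_add_le _ _) (add_le_add_left (abs_add_le _ _) _)
      _ ≤ ‖q - p‖ * (2 * (d / 81)) + 2 * (d / 81) * ‖r - p‖ + 2 * (d / 81) * (2 * (d / 81)) :=
          add_le_add (add_le_add h1 h2) h3
      _ = 2 * (d / 81) * ‖q - p‖ + 2 * (d / 81) * ‖r - p‖ + (2 * (d / 81)) * (2 * (d / 81)) := by ring
  -- convert dists to norms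
  have hnq : dist p q = ‖q - p‖ := by rw [dist_eq_norm, norm_sub_rev]
  have hnr : dist p r = ‖r - p‖ := by rw [dist_eq_norm, norm_sub_rev]
  rw [hnq] at hbase1 hdq
  rw [hnr] at hbase2 hdr
  -- final arithmetic contradiction
  nlinarith [norm_nonneg (q - p), norm_nonneg (r - p), hDpos, hbase1, hbase2, hdq, hdr, hd0]
end

section
/- Let a, b, c be three non-collinear points in ℝ² with all three pairwise distances at least D and all three point-to-opposite-line distances at least d. Set σ = min(d, D)/81. If each point moves by distance at most σ, the perpendicular distance from each new point to the line through the other two new points is still at least (1 − 3/81)·d... in particular positive. -/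
set_option maxHeartbeats 1000000

lemma dot_bound (x0 x1 y0 y1 s r : ℝ) (hx : x0^2+x1^2 ≤ s^2) (hy : y0^2+y1^2 ≤ r^2)
    (hs : 0 ≤ s) (hr : 0 ≤ r) : |x0*y0 + x1*y1| ≤ s*r := by
  have h1 : (x0*y0 + x1*y1)^2 ≤ (s*r)^2 := by
    have h2 : (x0^2+x1^2)*(y0^2+y1^2) ≤ s^2*r^2 :=
      mul_le_mul hx hy (by positivity) (by positivity)
    nlinarith [sq_nonneg (x0*y1 - x1*y0)]
  calc |x0*y0 + x1*y1| = Real.sqrt ((x0*y0+x1*y1)^2) := (Real.sqrt_sq_eq_abs _).symm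
    _ ≤ Real.sqrt ((s*r)^2) := Real.sqrt_le_sqrt h1
    _ = s*r := Real.sqrt_sq (by positivity)

lemma cross_bound (x0 x1 y0 y1 s r : ℝ) (hx : x0^2+x1^2 ≤ s^2) (hy : y0^2+y1^2 ≤ r^2)
    (hs : 0 ≤ s) (hr : 0 ≤ r) : |x0*y1 - x1*y0| ≤ s*r := by
  have := dot_bound x0 x1 y1 (-y0) s r hx (by nlinarith) hs hr
  convert this using 2; ring

lemma lam_bound (d t nab nac k L : ℝ) (hd : 0 < d) (ht0 : 0 < t)
    (hKbc : d*t ≤ k) (hKab : d*nab ≤ k) (hKac : d*nac ≤ k)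
    (hLb : |L| ≤ t*nab) (hL2 : |t^2 - L| ≤ t*nac) :
    d*(|t^2 - L| + |L|) ≤ 2*k*t - d*t^2 := by
  have habsL := abs_nonneg L
  have hub := le_abs_self (t^2 - L)
  have hlb := neg_abs_le (t^2 - L)
  rcases le_or_gt L 0 with h1 | h1
  · have hpos : (0:ℝ) ≤ t^2 - L := by nlinarith
    rw [abs_of_nonpos h1, abs_of_nonneg hpos]
    have f1 : t^2 - L ≤ t*nac := le_trans (le_abs_self _) hL2
    have f2 : d*(t^2 - L) ≤ d*(t*nac) := mul_le_mul_of_nonneg_left f1 hd.le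
    have f3 : d*nac*t ≤ k*t := mul_le_mul_of_nonneg_right hKac ht0.le
    linarith
  · rcases le_or_gt L (t^2) with h2 | h2
    · rw [abs_of_nonneg (by linarith : (0:ℝ) ≤ t^2 - L), abs_of_pos h1]
      have f3 : d*t*t ≤ k*t := mul_le_mul_of_nonneg_right hKbc ht0.le
      linarith
    · rw [abs_of_nonpos (by linarith : t^2 - L ≤ 0), abs_of_pos h1]
      have f1 : L ≤ t*nab := le_trans (le_abs_self _) hLb
      have f2 : d*L ≤ d*(t*nab) := mul_le_mul_of_nonneg_left f1 hd.le
      have f3 : d*nab*t ≤ k*t := mul_le_mul_of_nonneg_right hKab ht0.le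
      linarith

lemma final_arith (d σ t t' k k2 lam : ℝ)
    (hd : 0 < d) (hσ0 : 0 ≤ σ) (hσd : 81*σ ≤ d)
    (ht0 : 0 < t) (hdt : d ≤ t) (hσt : 81*σ ≤ t)
    (ht'0 : 0 < t') (ht'l : t - 2*σ ≤ t')
    (hk0 : 0 < k) (hKbc : d*t ≤ k)
    (hLam : d*lam ≤ 2*k*t - d*t^2)
    (X1 : k*(t*t') - 2*k*σ^2 - t^3*σ - lam*(t*σ) - 4*t^2*σ^2 ≤ t^2*k2) :
    (1 - 3/81)*d*t' ≤ k2 := by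
  have A1 : d*(lam*(t*σ)) ≤ (2*k*t - d*t^2)*(t*σ) := by
    have := mul_le_mul_of_nonneg_right hLam (mul_nonneg ht0.le hσ0)
    nlinarith
  have A5 : (d*t)*(d*t*t') ≤ k*(d*t*t') :=
    mul_le_mul_of_nonneg_right hKbc (by positivity)
  have C1f : d*k*σ^2 ≤ d*k*t^2/6561 := by
    have s1 : (81*σ)*(81*σ) ≤ t*t := mul_le_mul hσt hσt (by positivity) ht0.le
    have s2 := mul_le_mul_of_nonneg_left s1 (by positivity : (0:ℝ) ≤ d*k)
    nlinarith
  have C2f : k*t^2*σ ≤ d*k*t^2/81 := by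
    have s1 := mul_le_mul_of_nonneg_left hσd (by positivity : (0:ℝ) ≤ k*t^2)
    nlinarith
  have C3f : d*t^2*σ^2 ≤ d*k*t^2/6561 := by
    have s1 : (81*σ)*(81*σ) ≤ t*d := mul_le_mul hσt hσd (by positivity) ht0.le
    have s2 := mul_le_mul_of_nonneg_left s1 (by positivity : (0:ℝ) ≤ d*t^2)
    have s3 : (d*t)*(d*t^2) ≤ k*(d*t^2) := mul_le_mul_of_nonneg_right hKbc (by positivity)
    nlinarith
  have C4f : (79/81)*(d*k*t^2) ≤ d*k*(t*t') := by
    have s1 : t*(81*σ) ≤ t*t := mul_le_mul_of_nonneg_left hσt ht0.le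
    have s2 : t*(t - 2*σ) ≤ t*t' := mul_le_mul_of_nonneg_left ht'l ht0.le
    have s3 : (79/81)*t^2 ≤ t*t' := by nlinarith
    have s4 := mul_le_mul_of_nonneg_left s3 (by positivity : (0:ℝ) ≤ d*k)
    nlinarith
  have B1 := mul_le_mul_of_nonneg_left X1 hd.le
  have hgoal : ((1 - 3/81)*d*t')*(d*t^2) ≤ k2*(d*t^2) := by linarith [B1, A1, A5, C1f, C2f, C3f, C4f, mul_pos (mul_pos hd hk0) (mul_pos ht0 ht'0)]
  exact le_of_mul_le_mul_right hgoal (by positivity)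

lemma pos_of_mul (t nab k : ℝ) (ht0 : 0 < t) (hk0 : 0 < k) (hKt : k ≤ t * nab) : 0 < nab := by
  rcases mul_pos_iff.mp (lt_of_lt_of_le hk0 hKt) with ⟨_, h⟩ | ⟨h, _⟩
  · exact h
  · linarith

lemma core (w0 w1 v0 v1 da0 da1 db0 db1 dc0 dc1 d σ t t' nab nac K K' : ℝ)
    (hd : 0 < d) (hσ0 : 0 ≤ σ) (hσd : 81*σ ≤ d)
    (ht0 : 0 < t) (ht2 : t^2 = w0^2 + w1^2)
    (hnab0 : 0 ≤ nab) (hnab : nab^2 = v0^2 + v1^2)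
    (hnac0 : 0 ≤ nac) (hnac : nac^2 = (v0-w0)^2 + (v1-w1)^2)
    (ht'0 : 0 < t') (ht'2 : t'^2 = (w0 + (dc0-db0))^2 + (w1 + (dc1-db1))^2)
    (hK : K = w0*v1 - w1*v0)
    (hK' : K' = (w0 + (dc0-db0))*(v1 + (da1 - db1)) - (w1 + (dc1-db1))*(v0 + (da0 - db0)))
    (hKbc : d*t ≤ |K|) (hKab : d*nab ≤ |K|) (hKac : d*nac ≤ |K|)
    (hda : da0^2+da1^2 ≤ σ^2) (hdb : db0^2+db1^2 ≤ σ^2) (hdc : dc0^2+dc1^2 ≤ σ^2)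
    (ht'l : t - 2*σ ≤ t') :
    (1 - 3/81)*d*t' ≤ |K'| := by
  have hKt : |K| ≤ t * nab := by
    rw [hK]
    exact cross_bound w0 w1 v0 v1 t nab (le_of_eq ht2.symm) (le_of_eq hnab.symm) ht0.le hnab0
  have hK0 : (0:ℝ) < |K| := lt_of_lt_of_le (by positivity) hKbc
  have hnab_pos : 0 < nab := pos_of_mul t nab (|K|) ht0 hK0 hKt
  have hdt : d ≤ t := by
    have h1 : d*nab ≤ t*nab := le_trans hKab hKt
    exact le_of_mul_le_mul_right h1 hnab_pos
  have hσt : 81*σ ≤ t := le_trans hσd hdt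
  -- lambda-type bounds
  have hLb : |w0*v0 + w1*v1| ≤ t * nab :=
    dot_bound w0 w1 v0 v1 t nab (le_of_eq ht2.symm) (le_of_eq hnab.symm) ht0.le hnab0
  have hL2 : |t^2 - (w0*v0 + w1*v1)| ≤ t * nac := by
    have h := dot_bound w0 w1 (w0-v0) (w1-v1) t nac (le_of_eq ht2.symm)
      (le_of_eq (by rw [hnac]; ring)) ht0.le hnac0
    have he : t^2 - (w0*v0 + w1*v1) = w0*(w0-v0) + w1*(w1-v1) := by rw [ht2]; ring
    rw [he]; exact h
  set L := w0*v0 + w1*v1 with hLdef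
  have hLam : d*(|t^2 - L| + |L|) ≤ 2 * |K| * t - d*t^2 :=
    lam_bound d t nab nac (|K|) L hd ht0 hKbc hKab hKac hLb hL2
  -- key algebraic identity
  set e0 := dc0 - db0 with he0
  set e1 := dc1 - db1 with he1
  set P := e0*w0 + e1*w1 with hPdef
  set C1 := w0*da1 - w1*da0 with hC1def
  set C2 := w0*db1 - w1*db0 with hC2def
  set C3 := w0*dc1 - w1*dc0 with hC3def
  set C4 := e0*(da1-db1) - e1*(da0-db0) with hC4def
  have hid : t^2*K' = K*(t^2 + P) + (t^2*C1 - (t^2-L)*C2 - L*C3 + t^2*C4) := by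
    rw [hK', hK, hLdef, hPdef, hC1def, hC2def, hC3def, hC4def, he0, he1, ht2]
    ring
  -- bounds on the error terms
  have hC1b : |C1| ≤ t*σ := by
    rw [hC1def]
    exact cross_bound w0 w1 da0 da1 t σ (le_of_eq ht2.symm) hda ht0.le hσ0
  have hC2b : |C2| ≤ t*σ := by
    rw [hC2def]
    exact cross_bound w0 w1 db0 db1 t σ (le_of_eq ht2.symm) hdb ht0.le hσ0
  have hC3b : |C3| ≤ t*σ := by
    rw [hC3def]
    exact cross_bound w0 w1 dc0 dc1 t σ (le_of_eq ht2.symm) hdc ht0.le hσ0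
  have heb : e0^2 + e1^2 ≤ (2*σ)^2 := by
    rw [he0, he1]
    nlinarith only [sq_nonneg (dc0+db0), sq_nonneg (dc1+db1), hdb, hdc]
  have hdab : (da0-db0)^2 + (da1-db1)^2 ≤ (2*σ)^2 := by
    nlinarith only [sq_nonneg (da0+db0), sq_nonneg (da1+db1), hda, hdb]
  have hC4b : |C4| ≤ (2*σ)*(2*σ) := by
    rw [hC4def]
    exact cross_bound e0 e1 (da0-db0) (da1-db1) (2*σ) (2*σ) heb hdab (by positivity) (by positivity)
  have hPam : t*t' - 2*σ^2 ≤ t^2 + P := by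
    have h1 : t'^2 = t^2 + 2*P + (e0^2+e1^2) := by
      rw [hPdef, he0, he1, ht2, ht'2]; ring
    linarith only [h1, sq_nonneg (t - t'), heb]
  have hP0 : (0:ℝ) ≤ t^2 + P := by
    have h1 : (81*σ)*(79*σ) ≤ t*t' := by
      apply mul_le_mul hσt (by linarith) (by positivity) ht0.le
    nlinarith only [h1, hPam, sq_nonneg σ]
  -- assembly : lower bound for t^2 |K'|
  have hmain : |K| * (t^2+P) - (t^2*(t*σ) + (|t^2-L| + |L|) * (t*σ) + t^2*(4*σ^2))
      ≤ t^2 * |K'| := by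
    have h1 : t^2 * |K'| = |t^2 * K'| := by
      rw [abs_mul, abs_of_nonneg (by positivity : (0:ℝ) ≤ t^2)]
    have hX : |K * (t^2+P)| = |K| * (t^2+P) := by
      rw [abs_mul, abs_of_nonneg hP0]
    set R := t^2*C1 - (t^2-L)*C2 - L*C3 + t^2*C4 with hRdef
    have hR : |R| ≤ t^2*(t*σ) + (|t^2-L| + |L|) * (t*σ) + t^2*(4*σ^2) := by
      have b1 : |t^2 * C1| ≤ t^2*(t*σ) := by
        rw [abs_mul, abs_of_nonneg (by positivity : (0:ℝ) ≤ t^2)]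
        exact mul_le_mul_of_nonneg_left hC1b (by positivity)
      have b2 : |(t^2-L) * C2| ≤ |t^2-L| * (t*σ) := by
        rw [abs_mul]
        exact mul_le_mul_of_nonneg_left hC2b (abs_nonneg _)
      have b3 : |L * C3| ≤ |L| * (t*σ) := by
        rw [abs_mul]
        exact mul_le_mul_of_nonneg_left hC3b (abs_nonneg _)
      have b4 : |t^2 * C4| ≤ t^2*(4*σ^2) := by
        rw [abs_mul, abs_of_nonneg (by positivity : (0:ℝ) ≤ t^2)]
        have := mul_le_mul_of_nonneg_left hC4b (by positivity : (0:ℝ) ≤ t^2)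
        nlinarith only [this]
      have tri : |R| ≤ |t^2 * C1| + |(t^2-L) * C2| + |L * C3| + |t^2 * C4| := by
        have e1 : R = (t^2*C1 + -((t^2-L)*C2) + -(L*C3)) + t^2*C4 := by rw [hRdef]; ring
        calc |R| = |(t^2*C1 + -((t^2-L)*C2) + -(L*C3)) + t^2*C4| := by rw [e1]
          _ ≤ |t^2*C1 + -((t^2-L)*C2) + -(L*C3)| + |t^2 * C4| := abs_add_le _ _
          _ ≤ |t^2*C1 + -((t^2-L)*C2)| + |-(L*C3)| + |t^2 * C4| := by
              linarith [abs_add_le (t^2*C1 + -((t^2-L)*C2)) (-(L*C3))]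
          _ ≤ |t^2 * C1| + |-((t^2-L)*C2)| + |-(L*C3)| + |t^2 * C4| := by
              linarith [abs_add_le (t^2*C1) (-((t^2-L)*C2))]
          _ = |t^2 * C1| + |(t^2-L) * C2| + |L * C3| + |t^2 * C4| := by rw [abs_neg, abs_neg]
      linarith only [tri, b1, b2, b3, b4]
    have h2 : |K * (t^2+P)| ≤ |t^2 * K'| + |R| := by
      have e2 : K*(t^2+P) = t^2*K' + (-R) := by rw [hid]; ring
      calc |K * (t^2+P)| = |t^2*K' + (-R)| := by rw [e2]
        _ ≤ |t^2 * K'| + |(-R)| := abs_add_le _ _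
        _ = |t^2 * K'| + |R| := by rw [abs_neg]
    rw [hX] at h2
    rw [h1]
    linarith only [h2, hR]
  -- final assembly
  have X1 : |K| * (t*t') - 2 * |K| * σ^2 - t^3*σ - (|t^2-L| + |L|)*(t*σ) - 4*t^2*σ^2
      ≤ t^2 * |K'| := by
    have h := mul_le_mul_of_nonneg_left hPam hK0.le
    nlinarith only [hmain, h]
  exact final_arith d σ t t' (|K|) (|K'|) (|t^2-L| + |L|) hd hσ0 hσd ht0 hdt hσt ht'0 ht'l
    hK0 hKbc hLam X1

def crossP (u v : EuclideanSpace ℝ (Fin 2)) : ℝ := u 0 * v 1 - u 1 * v 0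

lemma norm_sq_eq (v : EuclideanSpace ℝ (Fin 2)) : ‖v‖^2 = (v 0)^2 + (v 1)^2 := by
  rw [EuclideanSpace.norm_eq, Real.sq_sqrt (by positivity)]
  simp [Fin.sum_univ_two, sq_abs]

lemma abs_cross_le (u v : EuclideanSpace ℝ (Fin 2)) : |crossP u v| ≤ ‖u‖ * ‖v‖ := by
  have h1 := norm_sq_eq u
  have h2 := norm_sq_eq v
  have h3 : crossP u v ^2 + (u 0 * v 0 + u 1 * v 1)^2 = (‖u‖*‖v‖)^2 := by
    rw [mul_pow, h1, h2]; simp only [crossP]; ring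
  nlinarith only [h3, abs_nonneg (crossP u v), sq_abs (crossP u v),
    mul_nonneg (norm_nonneg u) (norm_nonneg v), sq_nonneg (u 0 * v 0 + u 1 * v 1)]

lemma distToLine_eq (r p q : EuclideanSpace ℝ (Fin 2)) (hpq : p ≠ q) :
    distToLine r p q = |crossP (q - p) (r - p)| / dist p q := by
  have ht : (0:ℝ) < dist p q := dist_pos.mpr hpq
  have htn : dist p q = ‖q - p‖ := by rw [dist_comm, dist_eq_norm]
  have hmemp : p ∈ lineThrough p q := left_mem_affineSpan_pair ℝ p q
  apply le_antisymm
  · -- upper bound via foot point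
    set lam : ℝ := ((r-p) 0 * (q-p) 0 + (r-p) 1 * (q-p) 1) / (dist p q)^2 with hlam
    have hf : lam • (q - p) + p ∈ lineThrough p q := by
      have := smul_vsub_vadd_mem_affineSpan_pair lam p q
      simpa [lineThrough, vsub_eq_sub, vadd_eq_add] using this
    have hle := Metric.infDist_le_dist_of_mem (x := r) hf
    refine le_trans hle ?_
    have hds : dist r (lam • (q - p) + p) = ‖(r - p) - lam • (q-p)‖ := by
      rw [dist_eq_norm]; congr 1; abel
    rw [hds, le_div_iff₀ ht, ← Real.sqrt_sq (by positivity :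
        (0:ℝ) ≤ ‖(r - p) - lam • (q-p)‖ * dist p q), ← Real.sqrt_sq_eq_abs]
    apply Real.sqrt_le_sqrt
    apply le_of_eq
    have hexp : (‖(r - p) - lam • (q-p)‖ * dist p q)^2
        = ‖(r - p) - lam • (q-p)‖^2 * (dist p q)^2 := by ring
    have hN : (dist p q)^2 = (q-p) 0 ^2 + (q-p) 1 ^2 := by rw [htn, norm_sq_eq]
    have hne : (q-p) 0 ^2 + (q-p) 1 ^2 ≠ 0 := by rw [← hN]; positivity
    have hl : lam * ((q-p) 0 ^2 + (q-p) 1 ^2)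
        = (r-p) 0 * (q-p) 0 + (r-p) 1 * (q-p) 1 := by
      rw [hlam, hN, div_mul_cancel₀ _ hne]
    rw [hexp, norm_sq_eq, hN]
    simp only [PiLp.sub_apply, PiLp.smul_apply, smul_eq_mul, crossP]
    simp only [PiLp.sub_apply] at hl
    linear_combination (lam * ((q 0 - p 0)^2 + (q 1 - p 1)^2)
      - ((r 0 - p 0) * (q 0 - p 0) + (r 1 - p 1) * (q 1 - p 1))) * hl
  · -- lower bound
    apply le_of_not_gt
    intro hlt
    unfold distToLine at hlt
    rw [Metric.infDist_lt_iff ⟨p, hmemp⟩] at hlt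
    obtain ⟨y, hy, hdy⟩ := hlt
    have hy' : y -ᵥ p ∈ (affineSpan ℝ ({p, q} : Set (EuclideanSpace ℝ (Fin 2)))).direction :=
      AffineSubspace.vsub_mem_direction hy hmemp
    rw [direction_affineSpan, mem_vectorSpan_pair] at hy'
    obtain ⟨s, hs⟩ := hy'
    have hcr : crossP (q - p) (r - y) = crossP (q - p) (r - p) := by
      have hyy : y = s • (p - q) + p := by
        simp only [vsub_eq_sub] at hs
        rw [hs]; abel
      rw [hyy]
      simp only [crossP, PiLp.sub_apply, PiLp.add_apply, PiLp.smul_apply, smul_eq_mul]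
      ring
    have hb := abs_cross_le (q - p) (r - y)
    rw [hcr] at hb
    have : ‖r - y‖ = dist r y := (dist_eq_norm r y).symm
    rw [this, ← htn] at hb
    have : |crossP (q - p) (r - p)| / dist p q ≤ dist r y := by
      rw [div_le_iff₀ ht]
      linarith [hb]
    linarith

lemma distToLine_swap (r p q : EuclideanSpace ℝ (Fin 2)) :
    distToLine r p q = distToLine r q p := by
  unfold distToLine lineThrough
  rw [Set.pair_comm]

lemma master (a b c a' b' c' : EuclideanSpace ℝ (Fin 2))
    (D d : ℝ) (hD : 0 < D) (hd : 0 < d)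
    (hab : D ≤ dist a b) (hbc : D ≤ dist b c) (hac : D ≤ dist a c)
    (hda : d ≤ distToLine a b c) (hdb : d ≤ distToLine b a c) (hdc : d ≤ distToLine c a b)
    (σ : ℝ) (hσ : σ = min d D / 81)
    (ha' : dist a a' ≤ σ) (hb' : dist b b' ≤ σ) (hc' : dist c c' ≤ σ) :
    (1 - 3 / 81) * d ≤ distToLine a' b' c' := by
  have hσ0 : 0 ≤ σ := by
    rw [hσ]; positivity
  have hσd : 81*σ ≤ d := by
    rw [hσ]; have := min_le_left d D; linarith
  have hσD : 81*σ ≤ D := by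
    rw [hσ]; have := min_le_right d D; linarith
  have htbc : 0 < dist b c := lt_of_lt_of_le hD hbc
  have htab : 0 < dist a b := lt_of_lt_of_le hD hab
  have htac : 0 < dist a c := lt_of_lt_of_le hD hac
  have hbc0 : b ≠ c := dist_pos.mp htbc
  have hab0 : a ≠ b := dist_pos.mp htab
  have hac0 : a ≠ c := dist_pos.mp htac
  -- distance of new points
  have ht'l : dist b c - 2*σ ≤ dist b' c' := by
    have h4 := dist_triangle4 b b' c' c
    have : dist c' c = dist c c' := dist_comm _ _
    linarith
  have ht'0 : 0 < dist b' c' := by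
    have : (79/81)*D ≤ D - 2*σ := by linarith
    linarith
  have hb'c'0 : b' ≠ c' := dist_pos.mp ht'0
  -- convert hypotheses to cross form
  rw [distToLine_eq a b c hbc0, le_div_iff₀ htbc] at hda
  rw [distToLine_eq b a c hac0, le_div_iff₀ htac] at hdb
  rw [distToLine_eq c a b hab0, le_div_iff₀ htab] at hdc
  have eac : |crossP (c-a) (b-a)| = |crossP (c-b) (a-b)| := by
    rw [show crossP (c-a) (b-a) = -(crossP (c-b) (a-b)) by
      simp only [crossP, PiLp.sub_apply]; ring, abs_neg]
  have eab : |crossP (b-a) (c-a)| = |crossP (c-b) (a-b)| := by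
    rw [show crossP (b-a) (c-a) = crossP (c-b) (a-b) by
      simp only [crossP, PiLp.sub_apply]; ring]
  rw [eac] at hdb
  rw [eab] at hdc
  -- goal to cross form
  rw [distToLine_eq a' b' c' hb'c'0, le_div_iff₀ ht'0]
  -- apply core
  have hsq : ∀ x y : EuclideanSpace ℝ (Fin 2), ∀ s : ℝ, dist x y ≤ s →
      (y-x) 0 ^2 + (y-x) 1 ^2 ≤ s^2 := by
    intro x y s h
    have h1 : ‖y - x‖ ≤ s := by rwa [← dist_eq_norm, dist_comm]
    have := pow_le_pow_left₀ (norm_nonneg (y-x)) h1 2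
    rwa [norm_sq_eq] at this
  have ht2 : (dist b c)^2 = (c-b) 0 ^2 + (c-b) 1 ^2 := by
    rw [dist_comm, dist_eq_norm, norm_sq_eq]
  have hnab2 : (dist a b)^2 = (a-b) 0 ^2 + (a-b) 1 ^2 := by
    rw [dist_eq_norm, norm_sq_eq]
  have hnac2 : (dist a c)^2 = ((a-b) 0 - (c-b) 0)^2 + ((a-b) 1 - (c-b) 1)^2 := by
    rw [dist_eq_norm, norm_sq_eq]
    simp only [PiLp.sub_apply]; ring
  have ht'2 : (dist b' c')^2 = ((c-b) 0 + ((c'-c) 0 - (b'-b) 0))^2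
      + ((c-b) 1 + ((c'-c) 1 - (b'-b) 1))^2 := by
    rw [dist_comm, dist_eq_norm, norm_sq_eq]
    simp only [PiLp.sub_apply]; ring
  have hK'e : crossP (c'-b') (a'-b') = ((c-b) 0 + ((c'-c) 0 - (b'-b) 0))*((a-b) 1
      + ((a'-a) 1 - (b'-b) 1)) - ((c-b) 1 + ((c'-c) 1 - (b'-b) 1))*((a-b) 0
      + ((a'-a) 0 - (b'-b) 0)) := by
    simp only [crossP, PiLp.sub_apply]; ring
  exact core ((c-b) 0) ((c-b) 1) ((a-b) 0) ((a-b) 1)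
    ((a'-a) 0) ((a'-a) 1) ((b'-b) 0) ((b'-b) 1) ((c'-c) 0) ((c'-c) 1)
    d σ (dist b c) (dist b' c') (dist a b) (dist a c)
    (crossP (c-b) (a-b)) (crossP (c'-b') (a'-b'))
    hd hσ0 hσd htbc ht2 dist_nonneg hnab2 dist_nonneg hnac2 ht'0 ht'2
    rfl hK'e hda hdc hdb
    (hsq a a' σ ha') (hsq b b' σ hb') (hsq c c' σ hc') ht'l

theorem stmt14 (a b c a' b' c' : EuclideanSpace ℝ (Fin 2))
    (hcol : ¬ Collinear ℝ ({a, b, c} : Set (EuclideanSpace ℝ (Fin 2))))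
    (D d : ℝ) (hD : 0 < D) (hd : 0 < d)
    (hab : D ≤ dist a b) (hbc : D ≤ dist b c) (hac : D ≤ dist a c)
    (hda : d ≤ distToLine a b c) (hdb : d ≤ distToLine b a c) (hdc : d ≤ distToLine c a b)
    (σ : ℝ) (hσ : σ = min d D / 81)
    (ha' : dist a a' ≤ σ) (hb' : dist b b' ≤ σ) (hc' : dist c c' ≤ σ) :
    (1 - 3 / 81) * d ≤ distToLine a' b' c' ∧
    (1 - 3 / 81) * d ≤ distToLine b' a' c' ∧
    (1 - 3 / 81) * d ≤ distToLine c' a' b' := by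
  refine ⟨master a b c a' b' c' D d hD hd hab hbc hac hda hdb hdc σ hσ ha' hb' hc', ?_, ?_⟩
  · exact master b a c b' a' c' D d hD hd (by rwa [dist_comm]) hac hbc hdb hda
      (by rw [distToLine_swap]; exact hdc) σ hσ hb' ha' hc'
  · exact master c a b c' a' b' D d hD hd (by rwa [dist_comm]) hab (by rwa [dist_comm])
      hdc (by rw [distToLine_swap]; exact hda) (by rw [distToLine_swap]; exact hdb)
      σ hσ hc' ha' hb'
end
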